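/- Suppose u, p ∈ A satisfy F(u) = p and V(V(V(p))) + 4·V(p) = 0, set φ = V(V(u)) + u and R_c = F(θ + c) + (θ + 2c)·(θ + c) + K. Then the integrated Uhlmann–Pestov identity holds: I((F(φ))²) + I((H_c(φ))²) + I((2·H_c(φ) − (θ + c)·V(φ))²) = I(R_c·(V(φ))²). -/

import Mathlib

private lemma deriv_ofNat_aux {A : Type*} [CommRing A] [Algebra ℝ A]
    (D : Derivation ℝ A A) (n : ℕ) [n.AtLeastTwo] :
    D (OfNat.ofNat n : A) = 0 := by
  rw [← Nat.cast_ofNat]; exact D.map_natCast n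

set_option maxHeartbeats 40000000 in
/-- the integrated Uhlmann–Pestov identity for a pure Gaussian
thermostat with divergence-free external field. -/
theorem uhlmann_pestov_identity
    (A : Type*) [CommRing A] [Algebra ℝ A]
    (X H V : Derivation ℝ A A) (K : A)
    (hVX : ⁅V, X⁆ = H) (hHV : ⁅H, V⁆ = X) (hXH : ⁅X, H⁆ = K • V)
    (θ : A) (hθ : V (V θ) = -θ) (hdiv : X θ + H (V θ) = 0)
    (lam c : A) (hlam : lam = V θ)
    (F Hc : Derivation ℝ A A)
    (hF : F = X + lam • V) (hHc : Hc = H + c • V)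
    (I : A →ₗ[ℝ] ℝ)
    (hIX : ∀ a : A, I (X a) = 0) (hIH : ∀ a : A, I (H a) = 0)
    (hIV : ∀ a : A, I (V a) = 0)
    (u p : A) (hu : F u = p) (hp : V (V (V p)) + 4 * V p = 0)
    (φ : A) (hφ : φ = V (V u) + u)
    (Rc : A) (hRc : Rc = F (θ + c) + (θ + 2 * c) * (θ + c) + K) :
    I ((F φ) ^ 2) + I ((Hc φ) ^ 2) + I ((2 * Hc φ - (θ + c) * V φ) ^ 2) =
      I (Rc * (V φ) ^ 2) := by
  subst hlam hF hHc hφ hRc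
  have rXV : ∀ t : A, X (V t) = V (X t) - H t := by
    intro t
    have h := Derivation.congr_fun hVX t
    rw [Derivation.commutator_apply] at h
    linear_combination -h
  have rHV : ∀ t : A, H (V t) = V (H t) + X t := by
    intro t
    have h := Derivation.congr_fun hHV t
    rw [Derivation.commutator_apply] at h
    linear_combination h
  have rXH : ∀ t : A, X (H t) = H (X t) + K * V t := by
    intro t
    have h := Derivation.congr_fun hXH t
    rw [Derivation.commutator_apply, Derivation.smul_apply, smul_eq_mul] at h
    linear_combination h
  have hVHth : V (H θ) = -(2 * X θ) := by
    have h1 := rHV θ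
    linear_combination hdiv - h1
  have hXu : X u = p - V θ * V u := by
    have h := hu
    simp only [Derivation.add_apply, Derivation.smul_apply, smul_eq_mul] at h
    linear_combination h
  have hp3 : V (V (V p)) = -(4 * V p) := by linear_combination hp
  have hVK : ∀ t : A, V K * V t = 0 := by
    have h0 : ⁅V, K • V⁆ = (0 : Derivation ℝ A A) := by
      have hj := leibniz_lie V X H
      rw [hXH, hVX, lie_self] at hj
      have h2 : ⁅V, H⁆ = -X := by rw [← lie_skew, hHV]
      rw [h2, lie_neg, lie_self, neg_zero, add_zero] at hj
      rw [← hj]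
    intro t
    have h1 : ⁅V, K • V⁆ t = 0 := by rw [h0]; rfl
    rw [Derivation.commutator_apply] at h1
    simp only [Derivation.smul_apply, smul_eq_mul, Derivation.leibniz] at h1
    linear_combination h1
  have h2n : ∀ D : Derivation ℝ A A, D (2 : A) = 0 := fun D => by
    rw [show (2 : A) = ((2 : ℕ) : A) by norm_num]; exact D.map_natCast 2
  have h4n : ∀ D : Derivation ℝ A A, D (4 : A) = 0 := fun D => by
    rw [show (4 : A) = ((4 : ℕ) : A) by norm_num]; exact D.map_natCast 4
  have key : (8 : A) * (((X + V θ • V) (V (V u) + u)) ^ 2 + ((H + c • V) (V (V u) + u)) ^ 2 + (2 * ((H + c • V) (V (V u) + u)) - (θ + c) * V (V (V u) + u)) ^ 2 - (((X + V θ • V) (θ + c) + (θ + 2 * c) * (θ + c) + K) * (V (V (V u) + u)) ^ 2)) =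
      X ((-8) * ((V (H u)) * (V (V (V (V u))))) + (41) * ((V (V p)) * (V (V u))) + (-24) * ((V (V (H u))) * (V (V (V u)))) + (-88) * ((V c) * (V (V u)) * (V (V (V u)))) + (16) * ((V c) * (V u) * (V (V u))) + (66) * ((V p) * (V (V (V u)))) + (-16) * ((V p) * (V u)) + (-36) * ((V θ) * (V (V u)) * (V (V (V u)))) + (-8) * ((V θ) * (V u) * (V (V (V (V u))))) + (-24) * ((V u) * (V (V (H u)))) + (68) * ((c) * (V (V u)) * (V (V u))) + (-88) * ((c) * (V (V u)) * (V (V (V (V u))))) + (-124) * ((c) * (V (V (V u))) * (V (V (V u)))) + (32) * ((c) * (V u) * (V (V (V u)))) + (26) * ((θ) * (V (V u)) * (V (V u))) + (-28) * ((θ) * (V (V u)) * (V (V (V (V u))))) + (-38) * ((θ) * (V (V (V u))) * (V (V (V u)))) + (16) * ((θ) * (V u) * (V (V (V u)))))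
      + H ((-32) * ((V (H u)) * (V (V (V u)))) + (-33) * ((V (V p)) * (V (V (V u)))) + (8) * ((V (V (H u))) * (V (V (V (V u))))) + (8) * ((V (V (V u))) * (V (V (V (H u))))) + (-52) * ((V c) * (V (V u)) * (V (V u))) + (28) * ((V c) * (V (V (V u))) * (V (V (V u)))) + (-32) * ((V c) * (V u) * (V (V (V u)))) + (-8) * ((V c) * (V u) * (V u)) + (41) * ((V p) * (V (V u))) + (-41) * ((V p) * (V (V (V (V u))))) + (-10) * ((V θ) * (V (V u)) * (V (V u))) + (16) * ((V θ) * (V (V u)) * (V (V (V (V u))))) + (26) * ((V θ) * (V (V (V u))) * (V (V (V u)))) + (-24) * ((V u) * (V (H u))) + (8) * ((V u) * (V (V p))) + (8) * ((V u) * (V (V (V (H u))))) + (-224) * ((c) * (V (V u)) * (V (V (V u)))) + (56) * ((c) * (V (V (V u))) * (V (V (V (V u))))) + (-32) * ((c) * (V u) * (V (V (V (V u))))) + (-80) * ((θ) * (V (V u)) * (V (V (V u)))) + (20) * ((θ) * (V (V (V u))) * (V (V (V (V u))))) + (-16) * ((θ) * (V u) * (V (V (V (V u))))))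
      + V ((52) * ((H c) * (V (V u)) * (V (V u))) + (-28) * ((H c) * (V (V (V u))) * (V (V (V u)))) + (32) * ((H c) * (V u) * (V (V (V u)))) + (8) * ((H c) * (V u) * (V u)) + (49) * ((H p) * (V (V u))) + (18) * ((H θ) * (V (V u)) * (V (V u))) + (-10) * ((H θ) * (V (V (V u))) * (V (V (V u)))) + (8) * ((H θ) * (V u) * (V (V (V u)))) + (-8) * ((H u) * (V (H u))) + (8) * ((H u) * (V θ) * (V (V (V u)))) + (33) * ((V (H p)) * (V (V (V u)))) + (16) * ((V (H u)) * (V (V (H u)))) + (8) * ((V (H (H u))) * (V (V u))) + (-32) * ((V (V p)) * (V (V (H u)))) + (88) * ((V (V u)) * (V (V (V u))) * (X c)) + (36) * ((V (V u)) * (V (V (V u))) * (X θ)) + (-41) * ((V (V u)) * (V (X p))) + (-8) * ((V (V (H u))) * (V (V (V (H u))))) + (-8) * ((V (V (H (H u)))) * (V (V (V u)))) + (41) * ((V (V (V u))) * (X p)) + (-41) * ((V p) * (V (H u))) + (66) * ((V p) * (V (V p))) + (41) * ((V p) * (V (V (V (H u))))) + (-114) * ((V p) * (V θ) * (V (V (V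 u)))) + (-14) * ((V p) * (V θ) * (V u)) + (24) * ((V θ) * (V (H u)) * (V (V u))) + (-8) * ((V θ) * (V (H u)) * (V (V (V (V u))))) + (-32) * ((V θ) * (V (V p)) * (V (V u))) + (-16) * ((V θ) * (V (V u)) * (V (V (V (H u))))) + (8) * ((V θ) * (V (V (H u))) * (V (V (V u)))) + (80) * ((V θ) * (V θ) * (V (V u)) * (V (V (V u)))) + (40) * ((V θ) * (V θ) * (V u) * (V (V u))) + (-8) * ((V θ) * (V θ) * (V u) * (V (V (V (V u))))) + (-72) * ((V θ) * (V u) * (V (V (H u)))) + (-8) * ((V u) * (V (H p))) + (-16) * ((V u) * (V (V u)) * (X c)) + (-8) * ((V u) * (V (V (H (H u))))) + (-8) * ((K) * (V (V u)) * (V (V (V u)))) + (24) * ((c) * (V (H u)) * (V (V (V u)))) + (-80) * ((c) * (V (V p)) * (V (V (V u)))) + (-160) * ((c) * (V (V u)) * (V (V (H u)))) + (-56) * ((c) * (V (V (V u))) * (V (V (V (H u))))) + (-424) * ((c) * (V p) * (V (V u))) + (336) * ((c) * (V θ) * (V (V u)) * (V (V u))) + (-88) * ((c) * (V θ) * (V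 (V u)) * (V (V (V (V u))))) + (72) * ((c) * (V θ) * (V (V (V u))) * (V (V (V u)))) + (-176) * ((c) * (V θ) * (V u) * (V (V (V u)))) + (72) * ((c) * (V θ) * (V u) * (V u)) + (-48) * ((c) * (V u) * (V (H u))) + (80) * ((c) * (V u) * (V (V p))) + (32) * ((c) * (V u) * (V (V (V (H u))))) + (104) * ((c) * (θ) * (V (V u)) * (V (V (V u)))) + (36) * ((θ) * (V (H u)) * (V (V (V u)))) + (-32) * ((θ) * (V (V p)) * (V (V (V u)))) + (-112) * ((θ) * (V (V u)) * (V (V (H u)))) + (-20) * ((θ) * (V (V (V u))) * (V (V (V (H u))))) + (40) * ((θ) * (V θ) * (V (V u)) * (V (V u))) + (-28) * ((θ) * (V θ) * (V (V u)) * (V (V (V (V u))))) + (32) * ((θ) * (V θ) * (V (V (V u))) * (V (V (V u)))) + (-80) * ((θ) * (V θ) * (V u) * (V (V (V u)))) + (-32) * ((θ) * (V θ) * (V u) * (V u)) + (24) * ((θ) * (V u) * (V (V p))) + (16) * ((θ) * (V u) * (V (V (V (H u))))) + (20) * ((θ) * (θ) * (V (V u)) * (V (V (V u)))))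
      + ((-8) * (((V (V (V (V u))))) * (V K * V (u))) + (8) * (((V (V (V u)))) * (V K * V (V u)))) := by
    simp only [Derivation.add_apply, Derivation.smul_apply, smul_eq_mul, map_add, map_sub,
      map_neg, Derivation.leibniz, h2n, h4n, deriv_ofNat_aux X, deriv_ofNat_aux H, deriv_ofNat_aux V, hθ, hVHth, hXu, hp3, rXV, rXH, rHV,
      mul_zero, zero_mul, add_zero, zero_add, neg_zero, smul_eq_mul]
    ring
  have h3 := congrArg I key
  have h4 : I ((8 : A) * (((X + V θ • V) (V (V u) + u)) ^ 2 + ((H + c • V) (V (V u) + u)) ^ 2 + (2 * ((H + c • V) (V (V u) + u)) - (θ + c) * V (V (V u) + u)) ^ 2 - (((X + V θ • V) (θ + c) + (θ + 2 * c) * (θ + c) + K) * (V (V (V u) + u)) ^ 2))) = 8 * I (((X + V θ • V) (V (V u) + u)) ^ 2 + ((H + c • V) (V (V u) + u)) ^ 2 + (2 * ((H + c • V) (V (V u) + u)) - (θ + c) * V (V (V u) + u)) ^ 2 - (((X + V θ • V) (θ + c) + (θ + 2 * c) * (θ + c) + K) * (V (V (V u) + u)) ^ 2)) := by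
    rw [show ((8 : A) * (((X + V θ • V) (V (V u) + u)) ^ 2 + ((H + c • V) (V (V u) + u)) ^ 2 + (2 * ((H + c • V) (V (V u) + u)) - (θ + c) * V (V (V u) + u)) ^ 2 - (((X + V θ • V) (θ + c) + (θ + 2 * c) * (θ + c) + K) * (V (V (V u) + u)) ^ 2))) = (8 : ℝ) • (((X + V θ • V) (V (V u) + u)) ^ 2 + ((H + c • V) (V (V u) + u)) ^ 2 + (2 * ((H + c • V) (V (V u) + u)) - (θ + c) * V (V (V u) + u)) ^ 2 - (((X + V θ • V) (θ + c) + (θ + 2 * c) * (θ + c) + K) * (V (V (V u) + u)) ^ 2)) from by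
      rw [Algebra.smul_def, map_ofNat], map_smul, smul_eq_mul]
  have h5 : I (((X + V θ • V) (V (V u) + u)) ^ 2 + ((H + c • V) (V (V u) + u)) ^ 2 + (2 * ((H + c • V) (V (V u) + u)) - (θ + c) * V (V (V u) + u)) ^ 2 - (((X + V θ • V) (θ + c) + (θ + 2 * c) * (θ + c) + K) * (V (V (V u) + u)) ^ 2)) = I (((X + V θ • V) (V (V u) + u)) ^ 2) + I (((H + c • V) (V (V u) + u)) ^ 2) + I ((2 * ((H + c • V) (V (V u) + u)) - (θ + c) * V (V (V u) + u)) ^ 2) - I (((X + V θ • V) (θ + c) + (θ + 2 * c) * (θ + c) + K) * (V (V (V u) + u)) ^ 2) := by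
    simp only [map_add, map_sub]
  have h6 : I (X ((-8) * ((V (H u)) * (V (V (V (V u))))) + (41) * ((V (V p)) * (V (V u))) + (-24) * ((V (V (H u))) * (V (V (V u)))) + (-88) * ((V c) * (V (V u)) * (V (V (V u)))) + (16) * ((V c) * (V u) * (V (V u))) + (66) * ((V p) * (V (V (V u)))) + (-16) * ((V p) * (V u)) + (-36) * ((V θ) * (V (V u)) * (V (V (V u)))) + (-8) * ((V θ) * (V u) * (V (V (V (V u))))) + (-24) * ((V u) * (V (V (H u)))) + (68) * ((c) * (V (V u)) * (V (V u))) + (-88) * ((c) * (V (V u)) * (V (V (V (V u))))) + (-124) * ((c) * (V (V (V u))) * (V (V (V u)))) + (32) * ((c) * (V u) * (V (V (V u)))) + (26) * ((θ) * (V (V u)) * (V (V u))) + (-28) * ((θ) * (V (V u)) * (V (V (V (V u))))) + (-38) * ((θ) * (V (V (V u))) * (V (V (V u)))) + (16) * ((θ) * (V u) * (V (V (V u)))))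
      + H ((-32) * ((V (H u)) * (V (V (V u)))) + (-33) * ((V (V p)) * (V (V (V u)))) + (8) * ((V (V (H u))) * (V (V (V (V u))))) + (8) * ((V (V (V u))) * (V (V (V (H u))))) + (-52) * ((V c) * (V (V u)) * (V (V u))) + (28) * ((V c) * (V (V (V u))) * (V (V (V u)))) + (-32) * ((V c) * (V u) * (V (V (V u)))) + (-8) * ((V c) * (V u) * (V u)) + (41) * ((V p) * (V (V u))) + (-41) * ((V p) * (V (V (V (V u))))) + (-10) * ((V θ) * (V (V u)) * (V (V u))) + (16) * ((V θ) * (V (V u)) * (V (V (V (V u))))) + (26) * ((V θ) * (V (V (V u))) * (V (V (V u)))) + (-24) * ((V u) * (V (H u))) + (8) * ((V u) * (V (V p))) + (8) * ((V u) * (V (V (V (H u))))) + (-224) * ((c) * (V (V u)) * (V (V (V u)))) + (56) * ((c) * (V (V (V u))) * (V (V (V (V u))))) + (-32) * ((c) * (V u) * (V (V (V (V u))))) + (-80) * ((θ) * (V (V u)) * (V (V (V u)))) + (20) * ((θ) * (V (V (V u))) * (V (V (V (V u))))) + (-16) * ((θ) * (V u) * (V (V (V (V u))))))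
      + V ((52) * ((H c) * (V (V u)) * (V (V u))) + (-28) * ((H c) * (V (V (V u))) * (V (V (V u)))) + (32) * ((H c) * (V u) * (V (V (V u)))) + (8) * ((H c) * (V u) * (V u)) + (49) * ((H p) * (V (V u))) + (18) * ((H θ) * (V (V u)) * (V (V u))) + (-10) * ((H θ) * (V (V (V u))) * (V (V (V u)))) + (8) * ((H θ) * (V u) * (V (V (V u)))) + (-8) * ((H u) * (V (H u))) + (8) * ((H u) * (V θ) * (V (V (V u)))) + (33) * ((V (H p)) * (V (V (V u)))) + (16) * ((V (H u)) * (V (V (H u)))) + (8) * ((V (H (H u))) * (V (V u))) + (-32) * ((V (V p)) * (V (V (H u)))) + (88) * ((V (V u)) * (V (V (V u))) * (X c)) + (36) * ((V (V u)) * (V (V (V u))) * (X θ)) + (-41) * ((V (V u)) * (V (X p))) + (-8) * ((V (V (H u))) * (V (V (V (H u))))) + (-8) * ((V (V (H (H u)))) * (V (V (V u)))) + (41) * ((V (V (V u))) * (X p)) + (-41) * ((V p) * (V (H u))) + (66) * ((V p) * (V (V p))) + (41) * ((V p) * (V (V (V (H u))))) + (-114) * ((V p) * (V θ) * (V (V (V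 u)))) + (-14) * ((V p) * (V θ) * (V u)) + (24) * ((V θ) * (V (H u)) * (V (V u))) + (-8) * ((V θ) * (V (H u)) * (V (V (V (V u))))) + (-32) * ((V θ) * (V (V p)) * (V (V u))) + (-16) * ((V θ) * (V (V u)) * (V (V (V (H u))))) + (8) * ((V θ) * (V (V (H u))) * (V (V (V u)))) + (80) * ((V θ) * (V θ) * (V (V u)) * (V (V (V u)))) + (40) * ((V θ) * (V θ) * (V u) * (V (V u))) + (-8) * ((V θ) * (V θ) * (V u) * (V (V (V (V u))))) + (-72) * ((V θ) * (V u) * (V (V (H u)))) + (-8) * ((V u) * (V (H p))) + (-16) * ((V u) * (V (V u)) * (X c)) + (-8) * ((V u) * (V (V (H (H u))))) + (-8) * ((K) * (V (V u)) * (V (V (V u)))) + (24) * ((c) * (V (H u)) * (V (V (V u)))) + (-80) * ((c) * (V (V p)) * (V (V (V u)))) + (-160) * ((c) * (V (V u)) * (V (V (H u)))) + (-56) * ((c) * (V (V (V u))) * (V (V (V (H u))))) + (-424) * ((c) * (V p) * (V (V u))) + (336) * ((c) * (V θ) * (V (V u)) * (V (V u))) + (-88) * ((c) * (V θ) * (V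 (V u)) * (V (V (V (V u))))) + (72) * ((c) * (V θ) * (V (V (V u))) * (V (V (V u)))) + (-176) * ((c) * (V θ) * (V u) * (V (V (V u)))) + (72) * ((c) * (V θ) * (V u) * (V u)) + (-48) * ((c) * (V u) * (V (H u))) + (80) * ((c) * (V u) * (V (V p))) + (32) * ((c) * (V u) * (V (V (V (H u))))) + (104) * ((c) * (θ) * (V (V u)) * (V (V (V u)))) + (36) * ((θ) * (V (H u)) * (V (V (V u)))) + (-32) * ((θ) * (V (V p)) * (V (V (V u)))) + (-112) * ((θ) * (V (V u)) * (V (V (H u)))) + (-20) * ((θ) * (V (V (V u))) * (V (V (V (H u))))) + (40) * ((θ) * (V θ) * (V (V u)) * (V (V u))) + (-28) * ((θ) * (V θ) * (V (V u)) * (V (V (V (V u))))) + (32) * ((θ) * (V θ) * (V (V (V u))) * (V (V (V u)))) + (-80) * ((θ) * (V θ) * (V u) * (V (V (V u)))) + (-32) * ((θ) * (V θ) * (V u) * (V u)) + (24) * ((θ) * (V u) * (V (V p))) + (16) * ((θ) * (V u) * (V (V (V (H u))))) + (20) * ((θ) * (θ) * (V (V u)) * (V (V (V u)))))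
      + ((-8) * (((V (V (V (V u))))) * (V K * V (u))) + (8) * (((V (V (V u)))) * (V K * V (V u))))) = 0 := by
    simp only [hVK, mul_zero, zero_mul, map_add, map_zero, hIX, hIH, hIV, add_zero, zero_add]
  rw [h4, h5, h6] at h3
  linarith [h3]
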